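/- Let S be a 5-element subset of ℙ²(𝔽₄) such that no three points of S are collinear. Then there is exactly 1 point p ∈ ℙ²(𝔽₄) \ S such that no three points of S ∪ {p} are collinear. -/

import Mathlib

open scoped LinearAlgebra.Projectivization

-- auxiliary finite field with four elements
inductive F4 | O | I | A | B
deriving DecidableEq

instance : Fintype F4 :=
  ⟨⟨↑[F4.O, F4.I, F4.A, F4.B], by decide⟩, fun x => by cases x <;> decide⟩

namespace F4
def add : F4 → F4 → F4
  | O, x => x | x, O => x
  | I, I => O | I, A => B | I, B => A
  | A, I => B | A, A => O | A, B => I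
  | B, I => A | B, A => I | B, B => O
def mul : F4 → F4 → F4
  | O, _ => O | _, O => O
  | I, x => x | x, I => x
  | A, A => B | A, B => I
  | B, A => I | B, B => A
def inv : F4 → F4
  | O => O | I => I | A => B | B => A
instance : Zero F4 := ⟨O⟩
instance : One F4 := ⟨I⟩
instance : Add F4 := ⟨add⟩
instance : Mul F4 := ⟨mul⟩
instance : Neg F4 := ⟨id⟩
instance : Inv F4 := ⟨inv⟩
instance : AddCommGroup F4 where
  add := add
  zero := O
  neg := id
  nsmul := nsmulRec
  zsmul := zsmulRec
  add_assoc := by decide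
  zero_add := by decide
  add_zero := by decide
  add_comm := by decide
  neg_add_cancel := by decide
instance : CommRing F4 := {
  (inferInstance : AddCommGroup F4) with
  mul := mul
  one := I
  zero := O
  mul_assoc := by decide
  one_mul := by decide
  mul_one := by decide
  mul_comm := by decide
  left_distrib := by decide
  right_distrib := by decide
  zero_mul := by decide
  mul_zero := by decide }
instance : Field F4 := {
  (inferInstance : CommRing F4) with
  inv := inv
  exists_pair_ne := ⟨O, I, by decide⟩
  mul_inv_cancel := by decide
  inv_zero := by decide
  nnqsmul := _
  qsmul := _ }
end F4

-- abbreviations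
abbrev GF := GaloisField 2 2
abbrev V := Fin 3 → GF

noncomputable instance : Fintype GF := Fintype.ofFinite _

lemma cardGF : Fintype.card GF = 4 := by
  have := GaloisField.card 2 2 (by norm_num)
  rw [Nat.card_eq_fintype_card] at this
  simpa using this

noncomputable def e : F4 ≃+* GF :=
  FiniteField.ringEquivOfCardEq (by rw [cardGF]; decide)

instance : RingHomInvPair (e : F4 →+* GF) (e.symm : GF →+* F4) := RingHomInvPair.of_ringEquiv e

noncomputable def fL : (Fin 3 → F4) →ₛₗ[(e : F4 →+* GF)] V where
  toFun v := fun i => e (v i)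
  map_add' u v := by funext i; simp
  map_smul' c v := by funext i; simp [Pi.smul_apply, smul_eq_mul]

lemma fL_inj : Function.Injective fL := by
  intro u v h
  funext i
  exact e.injective (congrFun h i)

noncomputable def φ : ℙ F4 (Fin 3 → F4) → ℙ GF V := Projectivization.map fL fL_inj

lemma φ_inj : Function.Injective φ := Projectivization.map_injective fL fL_inj

lemma φ_surj : Function.Surjective φ := by
  intro x
  induction x using Projectivization.ind with
  | h w hw =>
    have hv : (fun i => e.symm (w i)) ≠ 0 := by
      intro h0
      apply hw
      funext i
      have := congrFun h0 i
      simp only [Pi.zero_apply] at this ⊢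
      have := congrArg e this
      simpa using this
    refine ⟨Projectivization.mk F4 (fun i => e.symm (w i)) hv, ?_⟩
    rw [φ, Projectivization.map_mk]
    congr 1
    funext i
    simp [fL]

section IndepMk
variable {ι K W : Type*} [DivisionRing K] [AddCommGroup W] [Module K W]

lemma independent_mk (g : ι → W) (hg : ∀ i, g i ≠ 0) :
    Projectivization.Independent (fun i => Projectivization.mk K (g i) (hg i)) ↔
      LinearIndependent K g := by
  constructor
  · intro h
    rw [Projectivization.independent_iff] at h
    choose a ha using fun i => Projectivization.exists_smul_eq_mk_rep K (g i) (hg i)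
    have h2 : LinearIndependent K (fun i => a i • g i) := by
      convert h using 1
      funext i
      exact ha i
    have h3 := h2.units_smul (fun i => (a i)⁻¹)
    convert h3 using 1
    funext i
    simp [Units.smul_def, smul_smul]
  · intro h
    exact Projectivization.Independent.mk g hg h

lemma dependent_mk (g : ι → W) (hg : ∀ i, g i ≠ 0) :
    Projectivization.Dependent (fun i => Projectivization.mk K (g i) (hg i)) ↔
      ¬ LinearIndependent K g := by
  rw [Projectivization.dependent_iff_not_independent, independent_mk]
def vec (i : Fin 21) : Fin 3 → F4 :=
  match i.val with
  | 0 => ![F4.O, F4.O, F4.I]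
  | 1 => ![F4.O, F4.I, F4.O]
  | 2 => ![F4.O, F4.I, F4.I]
  | 3 => ![F4.O, F4.I, F4.A]
  | 4 => ![F4.O, F4.I, F4.B]
  | 5 => ![F4.I, F4.O, F4.O]
  | 6 => ![F4.I, F4.O, F4.I]
  | 7 => ![F4.I, F4.O, F4.A]
  | 8 => ![F4.I, F4.O, F4.B]
  | 9 => ![F4.I, F4.I, F4.O]
  | 10 => ![F4.I, F4.I, F4.I]
  | 11 => ![F4.I, F4.I, F4.A]
  | 12 => ![F4.I, F4.I, F4.B]
  | 13 => ![F4.I, F4.A, F4.O]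
  | 14 => ![F4.I, F4.A, F4.I]
  | 15 => ![F4.I, F4.A, F4.A]
  | 16 => ![F4.I, F4.A, F4.B]
  | 17 => ![F4.I, F4.B, F4.O]
  | 18 => ![F4.I, F4.B, F4.I]
  | 19 => ![F4.I, F4.B, F4.A]
  | _ => ![F4.I, F4.B, F4.B]

def detF4 (u v w : Fin 3 → F4) : F4 :=
  u 0 * (v 1 * w 2 + v 2 * w 1) + u 1 * (v 0 * w 2 + v 2 * w 0) + u 2 * (v 0 * w 1 + v 1 * w 0)

def MEGA : Nat := 6899058558148747673689237953967322195272181877472144043713105084738629653254300352226017324398620996626950519993781312524012318059806348864601719861488725445765469528390211080656947466822764940167547677336245582969212611273023393513482023114528915964806731732127590550580415278559899283538911115932855102652541706515678027533055689550206026500465945866110028457757979605313704905428085804725557470948518397925623463842157703902913093108371107037755635940999232486463700707347135845760343076521428289924352001039283102190527221158872380555949072034522343270374824345191959023222504495780807977458288280226143456871030582156146658960825206712217868799138681797948931179601110907146019821665293069241018947094257544753459174487874059868374190974380037696265005421997766996456687616405872333407105362141266319362416075790554897918620153038392042402439179553168829190512497930067311107532453258985654546906095462059972029348025458930818040560194187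7775331684034957685843598634028320367634830444053957496264930243738613684812997401966511618296175277856850527379964984529753353980841038122508878815907244174744165833575782605794115785029761399589118576200030849915519523363614651703924915310714934864328089844046717847109298774406663678761472698596522779301671378628247623495978592516439994836488938254455836785580459787313852310738382612910981079610524453529535020414034496156932317231439152192749937881669249120835100781213244399418048375521037897225257450204011512454511720619298219647795608423625114843927582022367209357771589277039791181211012730258980586336010387113621599737556813267805960608722921784413449060887644290182881981413340920216521037630145156717090304321897236515565653571311654485450111731682476091933894922336027782571470904700814316674508423832911894222957213039261782316681228521386544032999589333622985166481665734994403680458844978658322762876322420367558931607920225072041121608779638086405312256646144926424480864859917818239420566040536726161526564902981791612514453917681082333199944089296931837458680197336728996357239853565954388478850971279707365845498890845185285907626114961980177720711787234715168419093225515159943597931093996380351523626882373373009715368490600068385764594466700621922600491784823400474266279943572284436429821283009557774147976716351315085204288825789977205473171790376908768699959747117483055418604003856556423386826541646994708937793438364280015048433456223825101011099336312320271685122162921077705065836227185040616332733120460105710008043789210081311075989441031442389471712864081193322433133950103574739307432454728062419221471479264169664743728039976186723149414648105876571079346283479571898414077687073710995820083194928532643349563586478551588270518677664527733008596938193792056347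51941913177753867880482238116515106404939333631

def colB (i j k : Fin 21) : Bool := (MEGA >>> ((i.val*21+j.val)*21+k.val)) &&& 1 == 1

lemma vec_ne (i : Fin 21) : vec i ≠ 0 := by
  revert i; decide

lemma detF4_det (u v w : Fin 3 → F4) : detF4 u v w = (Matrix.of ![u, v, w]).det := by
  rw [Matrix.det_fin_three]
  have hsub : ∀ a b : F4, a - b = a + b := by decide
  simp only [hsub, detF4, Matrix.of_apply, Matrix.cons_val', Matrix.cons_val_zero,
    Matrix.cons_val_one, Matrix.head_cons, Matrix.head_fin_const, Matrix.cons_val_fin_one,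
    Matrix.cons_val_two, Matrix.tail_cons, Matrix.empty_val']
  ring

lemma colB_iff : ∀ i j k : Fin 21, colB i j k = true ↔ detF4 (vec i) (vec j) (vec k) = 0 := by
  decide

lemma colB_swap12 : ∀ i j k : Fin 21, colB j i k = colB i j k := by decide
lemma colB_swap23 : ∀ i j k : Fin 21, colB i k j = colB i j k := by decide

noncomputable def mkF4 (i : Fin 21) : ℙ F4 (Fin 3 → F4) :=
  Projectivization.mk F4 (vec i) (vec_ne i)

lemma mkF4_inj : Function.Injective mkF4 := by
  intro i j h
  rw [mkF4, mkF4, Projectivization.mk_eq_mk_iff'] at h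
  by_contra hne
  exact (by decide : ∀ i j : Fin 21, i ≠ j → ¬ ∃ a : F4, a • vec j = vec i) i j hne h

set_option maxRecDepth 100000 in
lemma mkF4_surj : Function.Surjective mkF4 := by
  intro x
  induction x using Projectivization.ind with
  | h v hv =>
    obtain ⟨i, a, ha⟩ :=
      (by decide : ∀ v : Fin 3 → F4, v ≠ 0 → ∃ i : Fin 21, ∃ a : F4, a • v = vec i) v hv
    exact ⟨i, by rw [mkF4, Projectivization.mk_eq_mk_iff']; exact ⟨a, ha⟩⟩

noncomputable def pt (i : Fin 21) : ℙ GF V := φ (mkF4 i)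

lemma pt_bij : Function.Bijective pt :=
  ⟨φ_inj.comp mkF4_inj, φ_surj.comp mkF4_surj⟩

noncomputable def ptE : Fin 21 ≃ ℙ GF V := Equiv.ofBijective pt pt_bij

lemma fL_ne (i : Fin 21) : fL (vec i) ≠ 0 := by
  intro h
  exact vec_ne i (fL_inj (by simpa using h))

lemma pt_eq_mk (i : Fin 21) : pt i = Projectivization.mk GF (fL (vec i)) (fL_ne i) := by
  rw [pt, mkF4, φ, Projectivization.map_mk]

lemma dep_iff (i j k : Fin 21) :
    Projectivization.Dependent ![pt i, pt j, pt k] ↔ colB i j k = true := by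
  have hg : ∀ t : Fin 3, (![fL (vec i), fL (vec j), fL (vec k)] : Fin 3 → V) t ≠ 0 := by
    intro t
    fin_cases t <;> simp [fL_ne]
  have heq : (![pt i, pt j, pt k] : Fin 3 → ℙ GF V) =
      fun t => Projectivization.mk GF (![fL (vec i), fL (vec j), fL (vec k)] t) (hg t) := by
    funext t
    fin_cases t <;> simp [pt_eq_mk]
  rw [heq, dependent_mk]
  have hA : (Matrix.of ![fL (vec i), fL (vec j), fL (vec k)]) =
      (e : F4 →+* GF).mapMatrix (Matrix.of ![vec i, vec j, vec k]) := by
    ext t s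
    fin_cases t <;> fin_cases s <;> rfl
  have h1 : LinearIndependent GF (![fL (vec i), fL (vec j), fL (vec k)] : Fin 3 → V) ↔
      IsUnit (Matrix.of ![fL (vec i), fL (vec j), fL (vec k)]) :=
    Matrix.linearIndependent_rows_iff_isUnit
  rw [h1, hA, Matrix.isUnit_iff_isUnit_det, isUnit_iff_ne_zero, not_not, ← RingHom.map_det,
    map_eq_zero_iff (e : F4 →+* GF) e.injective, ← detF4_det]
  exact (colB_iff i j k).symm

lemma countP_one {α : Type*} (p : α → Bool) :
    ∀ l : List α, l.countP p = 1 → ∃ x ∈ l, p x = true ∧ ∀ y ∈ l, p y = true → y = x := by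
  intro l
  induction l with
  | nil => simp
  | cons x t ih =>
    intro h
    rw [List.countP_cons] at h
    by_cases hx : p x = true
    · have ht : t.countP p = 0 := by rw [if_pos hx] at h; omega
      refine ⟨x, by simp, hx, ?_⟩
      intro y hy hpy
      rcases List.mem_cons.1 hy with rfl | hyt
      · rfl
      · exact absurd hpy (by simpa using List.countP_eq_zero.1 ht y hyt)
    · have ht : t.countP p = 1 := by rw [if_neg hx] at h; omega
      obtain ⟨z, hz, hpz, huniq⟩ := ih ht
      refine ⟨z, List.mem_cons_of_mem _ hz, hpz, ?_⟩
      intro y hy hpy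
      rcases List.mem_cons.1 hy with rfl | hyt
      · exact absurd hpy hx
      · exact huniq y hyt hpy

def colN (i j k : Nat) : Bool := (MEGA >>> ((i*21+j)*21+k)) &&& 1 == 1

def arcN (a b c d e : Nat) : Bool :=
  !(colN a b c) && !(colN a b d) && !(colN a b e) && !(colN a c d) && !(colN a c e) &&
  !(colN a d e) && !(colN b c d) && !(colN b c e) && !(colN b d e) && !(colN c d e)

def predN (a b c d e p : Nat) : Bool :=
  (p != a) && (p != b) && (p != c) && (p != d) && (p != e) &&
  !(colN a b p) && !(colN a c p) && !(colN a d p) && !(colN a e p) && !(colN b c p) &&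
  !(colN b d p) && !(colN b e p) && !(colN c d p) && !(colN c e p) && !(colN d e p)

set_option maxRecDepth 40000 in
set_option synthInstance.maxSize 10000 in
set_option synthInstance.maxHeartbeats 10000000 in
set_option maxHeartbeats 1000000000 in
theorem coreN : ∀ a, a < 21 → ∀ b, b < 21 → a < b → ∀ c, c < 21 → b < c →
    ∀ d, d < 21 → c < d → ∀ e, e < 21 → d < e → arcN a b c d e = true →
    (List.range 21).countP (predN a b c d e) = 1 := by decide

lemma colB_eq_colN (i j k : Fin 21) : colB i j k = colN i.1 j.1 k.1 := rfl

/-- No three distinct points of `S ⊆ ℙ²(𝔽₄)` are collinear (i.e. have linearly dependent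
representative vectors). -/
def NoThreeCollinear (S : Set (ℙ (GaloisField 2 2) (Fin 3 → GaloisField 2 2))) : Prop :=
  ∀ p ∈ S, ∀ q ∈ S, ∀ r ∈ S, p ≠ q → p ≠ r → q ≠ r → ¬ Projectivization.Dependent ![p, q, r]

/-- A five-element subset of `ℙ²(𝔽₄)` with no three points collinear can be extended to a
six-element subset with no three points collinear in exactly 1 way. -/
theorem stmt_8 (S : Finset (ℙ (GaloisField 2 2) (Fin 3 → GaloisField 2 2)))
    (hcard : S.card = 5) (hS : NoThreeCollinear ↑S) :
    Nat.card {p : ℙ (GaloisField 2 2) (Fin 3 → GaloisField 2 2) //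
      p ∉ S ∧ NoThreeCollinear (insert p (↑S : Set _))} = 1 := by
  classical
  -- pull S back to Fin 21
  set T : Finset (Fin 21) := S.map ptE.symm.toEmbedding with hT
  have memT_iff : ∀ i : Fin 21, i ∈ T ↔ pt i ∈ S := by
    intro i
    constructor
    · rintro hi
      obtain ⟨q, hq, hqi⟩ := Finset.mem_map.1 hi
      have : pt i = q := by
        have : ptE i = q := by rw [← hqi]; simp
        exact this
      rwa [this]
    · intro h
      have hsy : ptE.symm (ptE i) = i := ptE.symm_apply_apply i
      exact Finset.mem_map.2 ⟨pt i, h, hsy⟩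
  have h5 : T.card = 5 := by rw [hT, Finset.card_map, hcard]
  obtain ⟨A, hlt, memA, hTset⟩ : ∃ A : Fin 5 → Fin 21, (∀ m n : Fin 5, m < n → A m < A n) ∧
      (∀ m : Fin 5, A m ∈ T) ∧
      (∀ x ∈ T, x = A 0 ∨ x = A 1 ∨ x = A 2 ∨ x = A 3 ∨ x = A 4) := by
    set f5 := T.orderIsoOfFin h5 with hf5
    refine ⟨fun m => (f5 m : Fin 21), ?_, fun m => (f5 m).2, ?_⟩
    · intro m n h
      exact Subtype.coe_lt_coe.2 (f5.lt_iff_lt.2 h)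
    · intro x hx
      obtain ⟨m, hm⟩ := f5.surjective ⟨x, hx⟩
      have hmx : (f5 m : Fin 21) = x := congrArg Subtype.val hm
      fin_cases m
      · exact Or.inl hmx.symm
      · exact Or.inr (Or.inl hmx.symm)
      · exact Or.inr (Or.inr (Or.inl hmx.symm))
      · exact Or.inr (Or.inr (Or.inr (Or.inl hmx.symm)))
      · exact Or.inr (Or.inr (Or.inr (Or.inr hmx.symm)))
  have ntcT : ∀ i ∈ T, ∀ j ∈ T, ∀ k ∈ T, i ≠ j → i ≠ k → j ≠ k → colB i j k = false := by
    intro i hi j hj k hk hij hik hjk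
    have hnd := hS (pt i) (Finset.mem_coe.2 ((memT_iff i).1 hi))
      (pt j) (Finset.mem_coe.2 ((memT_iff j).1 hj))
      (pt k) (Finset.mem_coe.2 ((memT_iff k).1 hk))
      (fun h => hij (pt_bij.1 h)) (fun h => hik (pt_bij.1 h)) (fun h => hjk (pt_bij.1 h))
    rw [dep_iff] at hnd
    simpa using hnd
  have hne5 : ∀ m n : Fin 5, m ≠ n → A m ≠ A n := by
    intro m n hmn
    rcases lt_or_gt_of_ne hmn with h | h
    · exact ne_of_lt (hlt m n h)
    · exact (ne_of_lt (hlt n m h)).symm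
  -- the characterization of extension points
  have hchar : ∀ p : Fin 21,
      predN (A 0).1 (A 1).1 (A 2).1 (A 3).1 (A 4).1 p.1 = true ↔
        (pt p ∉ S ∧ NoThreeCollinear (insert (pt p) (↑S : Set _))) := by
    intro p
    simp only [predN, Bool.and_eq_true, bne_iff_ne, ne_eq, Bool.not_eq_true']
    constructor
    · rintro ⟨⟨⟨⟨⟨⟨⟨⟨⟨⟨⟨⟨⟨⟨hna, hnb⟩, hnc⟩, hnd'⟩, hne'⟩, h1⟩, h2⟩, h3⟩, h4⟩, h5'⟩, h6⟩, h7⟩,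
        h8⟩, h9⟩, h10⟩
      have hpT : p ∉ T := by
        intro hp
        rcases hTset p hp with rfl | rfl | rfl | rfl | rfl
        · exact hna rfl
        · exact hnb rfl
        · exact hnc rfl
        · exact hnd' rfl
        · exact hne' rfl
      have hpS : pt p ∉ S := fun h => hpT ((memT_iff p).2 h)
      have pairOK : ∀ x ∈ T, ∀ y ∈ T, x ≠ y → colB x y p = false := by
        intro x hx y hy hxy
        rcases hTset x hx with rfl | rfl | rfl | rfl | rfl <;>
          rcases hTset y hy with rfl | rfl | rfl | rfl | rfl <;>
            first
              | exact absurd rfl hxy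
              | assumption
              | (rw [colB_swap12]; assumption)
      refine ⟨hpS, ?_⟩
      intro q hq r hr s hs hqr hqs hrs
      have hidx : ∀ z ∈ insert (pt p) (↑S : Set _), ∃ i : Fin 21, z = pt i ∧ (i = p ∨ i ∈ T) := by
        intro z hz
        rcases Set.mem_insert_iff.1 hz with rfl | hzS
        · exact ⟨p, rfl, Or.inl rfl⟩
        · obtain ⟨i, hi⟩ := pt_bij.2 z
          exact ⟨i, hi.symm, Or.inr ((memT_iff i).2 (by rw [hi]; exact Finset.mem_coe.1 hzS))⟩
      obtain ⟨iq, rfl, hiq⟩ := hidx q hq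
      obtain ⟨ir, rfl, hir⟩ := hidx r hr
      obtain ⟨is', rfl, his⟩ := hidx s hs
      have hij : iq ≠ ir := fun h => hqr (congrArg pt h)
      have hik : iq ≠ is' := fun h => hqs (congrArg pt h)
      have hjk : ir ≠ is' := fun h => hrs (congrArg pt h)
      rw [dep_iff]
      simp only [Bool.not_eq_true] at *
      rcases hiq with rfl | hiqT
      · rcases hir with rfl | hirT
        · exact absurd rfl hij
        · rcases his with rfl | hisT
          · exact absurd rfl hik
          · rw [colB_swap12, colB_swap23]
            exact pairOK ir hirT is' hisT hjk
      · rcases hir with rfl | hirT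
        · rcases his with rfl | hisT
          · exact absurd rfl hjk
          · rw [colB_swap23]
            exact pairOK iq hiqT is' hisT hik
        · rcases his with rfl | hisT
          · exact pairOK iq hiqT ir hirT hij
          · exact ntcT iq hiqT ir hirT is' hisT hij hik hjk
    · rintro ⟨hpS, hN⟩
      have hpT : p ∉ T := fun h => hpS ((memT_iff p).1 h)
      have hneA : ∀ m : Fin 5, p.1 ≠ (A m).1 := by
        intro m h
        exact hpT ((Fin.ext h : p = A m) ▸ memA m)
      have hcol : ∀ x ∈ T, ∀ y ∈ T, x ≠ y → colB x y p = false := by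
        intro x hx y hy hxy
        have hxS : pt x ∈ insert (pt p) (↑S : Set _) :=
          Set.mem_insert_of_mem _ (Finset.mem_coe.2 ((memT_iff x).1 hx))
        have hyS : pt y ∈ insert (pt p) (↑S : Set _) :=
          Set.mem_insert_of_mem _ (Finset.mem_coe.2 ((memT_iff y).1 hy))
        have hpI : pt p ∈ insert (pt p) (↑S : Set _) := Set.mem_insert _ _
        have hnd := hN (pt x) hxS (pt y) hyS (pt p) hpI
          (fun h => hxy (pt_bij.1 h))
          (fun h => hpT ((pt_bij.1 h) ▸ hx))
          (fun h => hpT ((pt_bij.1 h) ▸ hy))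
        rw [dep_iff] at hnd
        simpa using hnd
      refine ⟨⟨⟨⟨⟨⟨⟨⟨⟨⟨⟨⟨⟨⟨hneA 0, hneA 1⟩, hneA 2⟩, hneA 3⟩, hneA 4⟩, ?_⟩, ?_⟩, ?_⟩, ?_⟩,
        ?_⟩, ?_⟩, ?_⟩, ?_⟩, ?_⟩, ?_⟩
      · exact hcol (A 0) (memA 0) (A 1) (memA 1) (hne5 0 1 (by decide))
      · exact hcol (A 0) (memA 0) (A 2) (memA 2) (hne5 0 2 (by decide))
      · exact hcol (A 0) (memA 0) (A 3) (memA 3) (hne5 0 3 (by decide))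
      · exact hcol (A 0) (memA 0) (A 4) (memA 4) (hne5 0 4 (by decide))
      · exact hcol (A 1) (memA 1) (A 2) (memA 2) (hne5 1 2 (by decide))
      · exact hcol (A 1) (memA 1) (A 3) (memA 3) (hne5 1 3 (by decide))
      · exact hcol (A 1) (memA 1) (A 4) (memA 4) (hne5 1 4 (by decide))
      · exact hcol (A 2) (memA 2) (A 3) (memA 3) (hne5 2 3 (by decide))
      · exact hcol (A 2) (memA 2) (A 4) (memA 4) (hne5 2 4 (by decide))
      · exact hcol (A 3) (memA 3) (A 4) (memA 4) (hne5 3 4 (by decide))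
  -- apply the decided core theorem
  have harc : arcN (A 0).1 (A 1).1 (A 2).1 (A 3).1 (A 4).1 = true := by
    simp only [arcN, Bool.and_eq_true, Bool.not_eq_true']
    refine ⟨⟨⟨⟨⟨⟨⟨⟨⟨?_, ?_⟩, ?_⟩, ?_⟩, ?_⟩, ?_⟩, ?_⟩, ?_⟩, ?_⟩, ?_⟩ <;>
      · first
        | exact ntcT (A 0) (memA 0) (A 1) (memA 1) (A 2) (memA 2)
            (hne5 0 1 (by decide)) (hne5 0 2 (by decide)) (hne5 1 2 (by decide))
        | exact ntcT (A 0) (memA 0) (A 1) (memA 1) (A 3) (memA 3)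
            (hne5 0 1 (by decide)) (hne5 0 3 (by decide)) (hne5 1 3 (by decide))
        | exact ntcT (A 0) (memA 0) (A 1) (memA 1) (A 4) (memA 4)
            (hne5 0 1 (by decide)) (hne5 0 4 (by decide)) (hne5 1 4 (by decide))
        | exact ntcT (A 0) (memA 0) (A 2) (memA 2) (A 3) (memA 3)
            (hne5 0 2 (by decide)) (hne5 0 3 (by decide)) (hne5 2 3 (by decide))
        | exact ntcT (A 0) (memA 0) (A 2) (memA 2) (A 4) (memA 4)
            (hne5 0 2 (by decide)) (hne5 0 4 (by decide)) (hne5 2 4 (by decide))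
        | exact ntcT (A 0) (memA 0) (A 3) (memA 3) (A 4) (memA 4)
            (hne5 0 3 (by decide)) (hne5 0 4 (by decide)) (hne5 3 4 (by decide))
        | exact ntcT (A 1) (memA 1) (A 2) (memA 2) (A 3) (memA 3)
            (hne5 1 2 (by decide)) (hne5 1 3 (by decide)) (hne5 2 3 (by decide))
        | exact ntcT (A 1) (memA 1) (A 2) (memA 2) (A 4) (memA 4)
            (hne5 1 2 (by decide)) (hne5 1 4 (by decide)) (hne5 2 4 (by decide))
        | exact ntcT (A 1) (memA 1) (A 3) (memA 3) (A 4) (memA 4)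
            (hne5 1 3 (by decide)) (hne5 1 4 (by decide)) (hne5 3 4 (by decide))
        | exact ntcT (A 2) (memA 2) (A 3) (memA 3) (A 4) (memA 4)
            (hne5 2 3 (by decide)) (hne5 2 4 (by decide)) (hne5 3 4 (by decide))
  have key := coreN (A 0).1 (A 0).2 (A 1).1 (A 1).2 (hlt 0 1 (by decide))
    (A 2).1 (A 2).2 (hlt 1 2 (by decide)) (A 3).1 (A 3).2 (hlt 2 3 (by decide))
    (A 4).1 (A 4).2 (hlt 3 4 (by decide)) harc
  obtain ⟨x0, hx0mem, hx0, huniq⟩ := countP_one _ _ key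
  set p0 : Fin 21 := ⟨x0, List.mem_range.1 hx0mem⟩ with hp0
  have hP0 := (hchar p0).1 hx0
  rw [Nat.card_eq_one_iff_unique]
  constructor
  · constructor
    intro y z
    obtain ⟨iy, hiy⟩ := pt_bij.2 y.1
    obtain ⟨iz, hiz⟩ := pt_bij.2 z.1
    have hy : iy = p0 := by
      have := (hchar iy).2 (by rw [hiy]; exact y.2)
      exact Fin.ext (huniq iy.1 (List.mem_range.2 iy.2) this)
    have hz : iz = p0 := by
      have := (hchar iz).2 (by rw [hiz]; exact z.2)
      exact Fin.ext (huniq iz.1 (List.mem_range.2 iz.2) this)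
    apply Subtype.ext
    rw [← hiy, ← hiz, hy, hz]
  · exact ⟨⟨pt p0, hP0⟩⟩
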